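/- Let n₁,…,n_k be positive integers and set S = S(n₁,…,n_k). If ψ : ℤ → ℂ is a function such that the values ψ(0), ψ(1), …, ψ(|S|) are linearly independent over ℚ, then ψ cannot be written as ψ₁ + ⋯ + ψ_k where each ψ_s : ℤ → ℂ has period n_s. -/

import Mathlib

open Polynomial Finset

noncomputable def shiftE : Module.End ℂ (ℤ → ℂ) :=
{ toFun := fun f x => f (x + 1),
  map_add' := by intros; rfl,
  map_smul' := by intros; rfl }

lemma shiftE_pow (m : ℕ) (f : ℤ → ℂ) (x : ℤ) : (shiftE ^ m) f x = f (x + m) := by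
  induction m generalizing f x with
  | zero => simp
  | succ i ih =>
    rw [pow_succ]
    show (shiftE ^ i) (shiftE f) x = _
    rw [ih]
    show f (x + i + 1) = _
    push_cast; ring_nf

lemma rat_den_num (r d : ℕ) (hd : d ≠ 0) (h : r.Coprime d) :
    ((r : ℚ) / d).den = d ∧ ((r : ℚ) / d).num = r := by
  have : ((r : ℚ) / d) = (⟨(r : ℤ), d, hd, by simpa using h⟩ : ℚ) := by
    rw [Rat.mk_eq_divInt, Rat.divInt_eq_div]; push_cast; ring
  rw [this]
  exact ⟨rfl, rfl⟩

theorem stmt_12 (k : ℕ) (n : Fin k → ℕ) (hn : ∀ s, 0 < n s)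
    (S : Finset ℚ)
    (hS : S = Finset.univ.biUnion fun s =>
      (Finset.range (n s)).image fun r : ℕ => (r : ℚ) / (n s))
    (ψ : ℤ → ℂ)
    (hind : LinearIndependent ℚ (fun r : Fin (S.card + 1) => ψ (r : ℕ))) :
    ¬ ∃ ψs : Fin k → ℤ → ℂ,
      (∀ s x, ψs s (x + n s) = ψs s x) ∧ ∀ x : ℤ, ψ x = ∑ s, ψs s x := by
  rintro ⟨ψs, hper, hsum⟩
  classical
  set D : Finset ℕ := Finset.univ.biUnion (fun s => (n s).divisors) with hD
  have hdpos : ∀ d ∈ D, 0 < d := by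
    intro d hd
    rw [hD, mem_biUnion] at hd
    obtain ⟨s, -, hd⟩ := hd
    exact Nat.pos_of_mem_divisors hd
  -- the residue sets
  set F : ℕ → Finset ℚ := fun d =>
    ((Finset.range d).filter (fun r => d.Coprime r)).image (fun r : ℕ => (r : ℚ) / d) with hF
  have hFden : ∀ d, 0 < d → ∀ q ∈ F d, q.den = d := by
    intro d hd q hq
    rw [hF, mem_image] at hq
    obtain ⟨r, hr, rfl⟩ := hq
    rw [mem_filter] at hr
    exact (rat_den_num r d hd.ne' hr.2.symm).1
  have hFcard : ∀ d ∈ D, (F d).card = Nat.totient d := by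
    intro d hd
    rw [hF, Finset.card_image_of_injOn, Nat.totient]
    intro a ha b hb hab
    rw [mem_coe, mem_filter] at ha hb
    have ha' := (rat_den_num a d (hdpos d hd).ne' ha.2.symm).2
    have hb' := (rat_den_num b d (hdpos d hd).ne' hb.2.symm).2
    have hab' : ((a:ℚ)/d) = ((b:ℚ)/d) := hab
    rw [hab'] at ha'
    exact_mod_cast ha'.symm.trans hb'
  have hcard : ∑ d ∈ D, Nat.totient d ≤ S.card := by
    have hdisj : ∀ x ∈ D, ∀ y ∈ D, x ≠ y → Disjoint (F x) (F y) := by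
      intro x hx y hy hxy
      rw [Finset.disjoint_left]
      intro q hqx hqy
      exact hxy ((hFden x (hdpos x hx) q hqx).symm.trans (hFden y (hdpos y hy) q hqy))
    have hsub : D.biUnion F ⊆ S := by
      intro q hq
      rw [mem_biUnion] at hq
      obtain ⟨d, hd, hqd⟩ := hq
      rw [hF, mem_image] at hqd
      obtain ⟨r, hr, rfl⟩ := hqd
      rw [mem_filter, mem_range] at hr
      rw [hD, mem_biUnion] at hd
      obtain ⟨s, -, hds⟩ := hd
      obtain ⟨hdvd, hns⟩ := Nat.mem_divisors.mp hds
      have hd0 : 0 < d := hdpos d (by rw [hD, mem_biUnion]; exact ⟨s, mem_univ s, hds⟩)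
      have he0 : 0 < n s / d := Nat.div_pos (Nat.le_of_dvd (hn s) hdvd) hd0
      rw [hS, mem_biUnion]
      refine ⟨s, mem_univ s, ?_⟩
      rw [mem_image]
      refine ⟨r * (n s / d), ?_, ?_⟩
      · rw [mem_range]
        calc r * (n s / d) < d * (n s / d) := by
              exact (Nat.mul_lt_mul_right he0).mpr hr.1
          _ = n s := Nat.mul_div_cancel' hdvd
      · have hkey : (n s : ℚ) = (d : ℚ) * (n s / d : ℕ) := by
          exact_mod_cast (Nat.mul_div_cancel' hdvd).symm
        rw [hkey]
        push_cast
        rw [mul_div_mul_right _ _ (by exact_mod_cast he0.ne' : ((n s / d : ℕ) : ℚ) ≠ 0)]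
    calc ∑ d ∈ D, Nat.totient d = ∑ d ∈ D, (F d).card := by
          exact Finset.sum_congr rfl (fun d hd => (hFcard d hd).symm)
      _ = (D.biUnion F).card := (Finset.card_biUnion hdisj).symm
      _ ≤ S.card := Finset.card_le_card hsub
  -- the annihilating polynomial
  set P : ℚ[X] := ∏ d ∈ D, cyclotomic d ℚ with hP
  have hPmon : P.Monic := monic_prod_of_monic _ _ fun d _ => cyclotomic.monic d ℚ
  have hPdeg : P.natDegree = ∑ d ∈ D, Nat.totient d := by
    rw [hP, natDegree_prod_of_monic _ _ fun d _ => cyclotomic.monic d ℚ]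
    exact Finset.sum_congr rfl fun d _ => natDegree_cyclotomic d ℚ
  set Pc : ℂ[X] := P.map (algebraMap ℚ ℂ) with hPc
  have hPcprod : Pc = ∏ d ∈ D, cyclotomic d ℂ := by
    rw [hPc, hP, Polynomial.map_prod]
    exact Finset.prod_congr rfl fun d _ => map_cyclotomic d (algebraMap ℚ ℂ)
  have hPcdeg : Pc.natDegree = P.natDegree := hPmon.natDegree_map _
  have hdegle : Pc.natDegree ≤ S.card := by
    rw [hPcdeg, hPdeg]; exact hcard
  -- annihilation
  have hann : (aeval shiftE Pc) ψ = 0 := by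
    have hψ : ψ = ∑ s, ψs s := funext fun x => by rw [hsum x, Finset.sum_apply]
    rw [hψ, map_sum]
    refine Finset.sum_eq_zero fun s _ => ?_
    obtain ⟨q, hq⟩ : ((X : ℂ[X]) ^ (n s) - 1) ∣ Pc := by
      rw [hPcprod, ← prod_cyclotomic_eq_X_pow_sub_one (hn s) ℂ]
      refine Finset.prod_dvd_prod_of_subset _ _ _ ?_
      intro d hd
      rw [hD, mem_biUnion]
      exact ⟨s, mem_univ s, hd⟩
    have hz : (aeval shiftE ((X : ℂ[X]) ^ (n s) - 1)) (ψs s) = 0 := by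
      rw [map_sub, aeval_X_pow, map_one]
      funext x
      have : ((shiftE ^ (n s) - 1) (ψs s)) x = ψs s (x + n s) - ψs s x := by
        rw [LinearMap.sub_apply, Module.End.one_apply, Pi.sub_apply, shiftE_pow]
      rw [this, hper s x, sub_self]
      rfl
    rw [hq, mul_comm, map_mul, Module.End.mul_apply, hz, map_zero]
  -- extract the linear relation
  have hrel : ∑ i ∈ Finset.range (Pc.natDegree + 1), Pc.coeff i * ψ i = 0 := by
    have h0 : (aeval shiftE Pc) ψ 0 = 0 := by rw [hann]; rfl
    rw [aeval_eq_sum_range (p := Pc) shiftE, LinearMap.sum_apply, Finset.sum_apply] at h0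
    simpa only [LinearMap.smul_apply, Pi.smul_apply, smul_eq_mul, shiftE_pow, zero_add]
      using h0
  have hrel2 : ∑ i ∈ Finset.range (S.card + 1), Pc.coeff i * ψ i = 0 := by
    rw [← Finset.sum_subset (Finset.range_subset_range.mpr (by omega : Pc.natDegree + 1 ≤ S.card + 1))
      (fun i _ hi => ?_), hrel]
    rw [coeff_eq_zero_of_natDegree_lt, zero_mul]
    rw [Finset.mem_range, not_lt] at hi
    omega
  have hfin : ∑ i : Fin (S.card + 1), (fun j : ℕ => P.coeff j • ψ (j : ℤ)) (i : ℕ) = 0 := by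
    rw [Fin.sum_univ_eq_sum_range (fun j : ℕ => P.coeff j • ψ (j : ℤ)) (S.card + 1), ← hrel2]
    refine Finset.sum_congr rfl fun i _ => ?_
    rw [hPc, coeff_map, ← Algebra.smul_def]
  have hg := Fintype.linearIndependent_iff.mp hind (fun i : Fin (S.card + 1) => P.coeff i)
    hfin ⟨Pc.natDegree, by omega⟩
  have hone : P.coeff P.natDegree = 0 := by simpa [hPcdeg] using hg
  rw [hPmon.coeff_natDegree] at hone
  exact one_ne_zero hone
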